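/- Let L be the combinatorial Laplacian of a weighted graph G on N vertices, C ∈ ℝ^{n×N} a coarsening matrix with Π = Cᵀ C, and L̃ = C L Cᵀ. Then for every k with 1 ≤ k ≤ n, the k-th smallest eigenvalue of L̃ satisfies the variational characterization λ̃_k = min over all k-dimensional linear subspaces U of ℝ^N contained in the range of Π of max_{x ∈ U, x ≠ 0} (xᵀ L x)/(xᵀ x). -/

import Mathlib

open Matrix

/-- The combinatorial Laplacian `L = D - W`. -/
def lap {N : ℕ} (W : Matrix (Fin N) (Fin N) ℝ) : Matrix (Fin N) (Fin N) ℝ :=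
  Matrix.diagonal (fun i => ∑ j, W i j) - W

/-- `W` is the weight matrix of a weighted graph: symmetric, nonnegative, zero diagonal. -/
def IsWeightedGraph {N : ℕ} (W : Matrix (Fin N) (Fin N) ℝ) : Prop :=
  (∀ i j, W i j = W j i) ∧ (∀ i j, 0 ≤ W i j) ∧ (∀ i, W i i = 0)

/-- A coarsening matrix `C : ℝ^{n×N}`. -/
def IsCoarsening {n N : ℕ} (C : Matrix (Fin n) (Fin N) ℝ) : Prop :=
  ∃ φ : Fin N → Fin n, Function.Surjective φ ∧
    ∀ i j, C i j =
      if φ j = i then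
        (Real.sqrt ((Finset.univ.filter (fun j' : Fin N => φ j' = i)).card : ℝ))⁻¹
      else 0

lemma coarsening_CCt {n N : ℕ} (C : Matrix (Fin n) (Fin N) ℝ) (hC : IsCoarsening C) :
    C * Cᵀ = 1 := by
  obtain ⟨φ, hsurj, hval⟩ := hC
  ext i i'
  simp only [mul_apply, transpose_apply, one_apply]
  by_cases h : i = i'
  · subst h
    set m := (Finset.univ.filter (fun j' : Fin N => φ j' = i)).card with hm
    have hmpos : 0 < m := by
      obtain ⟨j, hj⟩ := hsurj i
      exact Finset.card_pos.mpr ⟨j, by simp [hj]⟩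
    have : ∀ j, C i j * C i j = if φ j = i then ((m : ℝ))⁻¹ else 0 := by
      intro j
      rw [hval i j]
      by_cases hj : φ j = i
      · simp only [hj, if_pos rfl, ← hm, if_true]
        rw [← mul_inv, Real.mul_self_sqrt (by positivity)]
      · simp [hj]
    rw [if_pos rfl]
    simp only [this]
    rw [Finset.sum_ite, Finset.sum_const_zero, add_zero, Finset.sum_const, ← hm,
      nsmul_eq_mul]
    field_simp
  · rw [if_neg h]
    apply Finset.sum_eq_zero
    intro j _
    rw [hval i j, hval i' j]
    by_cases hj : φ j = i
    · have : φ j ≠ i' := by rw [hj]; exact h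
      simp [this]
    · simp [hj]


/-- the Courant–Fischer type variational characterization of the `k`-th smallest
eigenvalue of the coarsened Laplacian `L̃ = C L Cᵀ`:
`λ̃_k` is the minimum, over all `k`-dimensional subspaces `U` of `ℝ^N` contained in the range of
`Π = CᵀC`, of the maximum Rayleigh quotient `(xᵀ L x)/(xᵀ x)` over nonzero `x ∈ U`.
(Here `k : Fin n` is the 0-based index, so the subspace dimension is `k + 1`.) -/
theorem coarsened_laplacian_minmax {n N : ℕ} (hn : n ≤ N)
    (W : Matrix (Fin N) (Fin N) ℝ) (hW : IsWeightedGraph W)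
    (C : Matrix (Fin n) (Fin N) ℝ) (hC : IsCoarsening C)
    (lamt : Fin n → ℝ) (xt : Fin n → Fin n → ℝ)
    (hmonot : Monotone lamt)
    (horthot : ∀ i j, xt i ⬝ᵥ xt j = if i = j then (1 : ℝ) else 0)
    (heigt : ∀ i, (C * lap W * Cᵀ) *ᵥ xt i = lamt i • xt i)
    (k : Fin n) :
    IsLeast
      { r : ℝ | ∃ U : Submodule ℝ (Fin N → ℝ),
          Module.finrank ℝ U = (k : ℕ) + 1 ∧
          U ≤ LinearMap.range (Matrix.toLin' (Cᵀ * C)) ∧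
          r = sSup { q : ℝ | ∃ y : Fin N → ℝ,
                y ∈ U ∧ y ≠ 0 ∧ q = (y ⬝ᵥ (lap W *ᵥ y)) / (y ⬝ᵥ y) } }
      (lamt k) := by
  have hCCt : C * Cᵀ = 1 := coarsening_CCt C hC
  set L := lap W with hLdef
  set Lt := C * L * Cᵀ with hLtdef
  set X : Matrix (Fin n) (Fin n) ℝ := Matrix.of xt with hXdef
  have hXXt : X * Xᵀ = 1 := by
    ext i j
    simpa [mul_apply, one_apply, dotProduct, hXdef, Matrix.of_apply] using horthot i j
  have hXtX : Xᵀ * X = 1 := mul_eq_one_comm.mp hXXt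
  -- eigendecomposition
  have hEig : Lt = Xᵀ * Matrix.diagonal lamt * X := by
    have h1 : Lt * Xᵀ = Xᵀ * Matrix.diagonal lamt := by
      ext j i
      have h := congrFun (heigt i) j
      simp only [mulVec, dotProduct, Pi.smul_apply, smul_eq_mul] at h
      have hrhs : (Xᵀ * Matrix.diagonal lamt) j i = lamt i * xt i j := by
        simp only [mul_apply, transpose_apply, Matrix.diagonal_apply, hXdef, Matrix.of_apply,
          mul_ite, mul_zero]
        rw [Finset.sum_ite_eq' Finset.univ i (fun l => xt l j * lamt l)]
        simp [mul_comm]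
      have hlhs : (Lt * Xᵀ) j i = ∑ l, Lt j l * xt i l := by
        simp [mul_apply, transpose_apply, hXdef]
      rw [hlhs, hrhs]
      exact h
    calc Lt = Lt * 1 := (Matrix.mul_one Lt).symm
      _ = Lt * (Xᵀ * X) := by rw [hXtX]
      _ = (Lt * Xᵀ) * X := (Matrix.mul_assoc _ _ _).symm
      _ = _ := by rw [h1]
  -- injectivity of Cᵀ
  have hinj : ∀ v : Fin n → ℝ, Cᵀ *ᵥ v = 0 → v = 0 := by
    intro v hv
    have h2 : C *ᵥ (Cᵀ *ᵥ v) = 0 := by rw [hv, Matrix.mulVec_zero]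
    rwa [Matrix.mulVec_mulVec, hCCt, Matrix.one_mulVec] at h2
  -- transfer of quadratic forms
  have hquad : ∀ v : Fin n → ℝ,
      (Cᵀ *ᵥ v) ⬝ᵥ (L *ᵥ (Cᵀ *ᵥ v)) = v ⬝ᵥ (Lt *ᵥ v) := by
    intro v
    rw [Matrix.mulVec_mulVec, Matrix.mulVec_transpose, Matrix.dotProduct_mulVec,
      Matrix.vecMul_vecMul, Matrix.dotProduct_mulVec, hLtdef, Matrix.mul_assoc]
  have hdot : ∀ v : Fin n → ℝ, (Cᵀ *ᵥ v) ⬝ᵥ (Cᵀ *ᵥ v) = v ⬝ᵥ v := by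
    intro v
    rw [Matrix.dotProduct_mulVec, Matrix.vecMul_transpose, Matrix.mulVec_mulVec, hCCt,
      Matrix.one_mulVec]
  -- coordinates
  have cquad : ∀ v : Fin n → ℝ, v ⬝ᵥ (Lt *ᵥ v) = ∑ i, lamt i * (xt i ⬝ᵥ v) ^ 2 := by
    intro v
    rw [hEig, ← Matrix.mulVec_mulVec, ← Matrix.mulVec_mulVec, Matrix.dotProduct_mulVec,
      Matrix.vecMul_transpose]
    have : ∀ i, (X *ᵥ v) i = xt i ⬝ᵥ v := fun i => rfl
    simp only [dotProduct, Matrix.mulVec_diagonal, this]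
    exact Finset.sum_congr rfl fun i _ => by ring
  have cnorm : ∀ v : Fin n → ℝ, v ⬝ᵥ v = ∑ i, (xt i ⬝ᵥ v) ^ 2 := by
    intro v
    have h3 : (X *ᵥ v) ⬝ᵥ (X *ᵥ v) = v ⬝ᵥ v := by
      rw [Matrix.dotProduct_mulVec, ← Matrix.vecMul_transpose, Matrix.vecMul_vecMul, hXtX,
        Matrix.vecMul_one]
    rw [← h3]
    simp only [dotProduct]
    refine Finset.sum_congr rfl fun i _ => ?_
    rw [pow_two]
    rfl
  -- bilinearity expansion
  have expand : ∀ {m : ℕ} (u : Fin n → ℝ) (a : Fin m → ℝ) (w : Fin m → Fin n → ℝ),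
      u ⬝ᵥ (∑ j, a j • w j) = ∑ j, a j * (u ⬝ᵥ w j) := by
    intro m u a w
    simp only [dotProduct, Finset.sum_apply, Pi.smul_apply, smul_eq_mul, Finset.mul_sum,
      Finset.sum_mul]
    rw [Finset.sum_comm]
    exact Finset.sum_congr rfl fun j _ => Finset.sum_congr rfl fun i _ => by ring
  -- linear independence of subfamilies of xt
  have hlixt : ∀ {m : ℕ} (ι : Fin m → Fin n), Function.Injective ι →
      LinearIndependent ℝ (fun j => xt (ι j)) := by
    intro m ι hι
    rw [Fintype.linearIndependent_iff]
    intro g hg j0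
    have h0 : xt (ι j0) ⬝ᵥ (∑ j, g j • xt (ι j)) = 0 := by
      rw [hg, dotProduct_zero]
    rw [expand] at h0
    simp only [horthot] at h0
    rw [Finset.sum_eq_single j0 (fun b _ hb => by simp [hι.eq_iff, Ne.symm hb])
      (by simp)] at h0
    simpa using h0
  have hker : LinearMap.ker (Matrix.toLin' Cᵀ) = ⊥ := by
    rw [LinearMap.ker_eq_bot']
    intro v hv
    exact hinj v (by rwa [Matrix.toLin'_apply] at hv)
  have hliC : ∀ {m : ℕ} (ι : Fin m → Fin n), Function.Injective ι →
      LinearIndependent ℝ (fun j => Cᵀ *ᵥ xt (ι j)) := by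
    intro m ι hι
    have h4 := (hlixt ι hι).map' (Matrix.toLin' Cᵀ) hker
    simpa [Function.comp_def, Matrix.toLin'_apply] using h4
  -- sum over Cᵀ commutes
  have hmvsum : ∀ {m : ℕ} (a : Fin m → ℝ) (w : Fin m → Fin n → ℝ),
      Cᵀ *ᵥ (∑ j, a j • w j) = ∑ j, a j • (Cᵀ *ᵥ w j) := by
    intro m a w
    calc Cᵀ *ᵥ (∑ j, a j • w j) = Matrix.mulVecLin Cᵀ (∑ j, a j • w j) := by
          rw [Matrix.mulVecLin_apply]
      _ = ∑ j, a j • Matrix.mulVecLin Cᵀ (w j) := by rw [map_sum]; simp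
      _ = ∑ j, a j • (Cᵀ *ᵥ w j) := by simp [Matrix.mulVecLin_apply, Matrix.mulVec_transpose]
  have hknat : (k : ℕ) + 1 ≤ n := k.isLt
  -- positivity of denominators
  have hdenpos : ∀ v : Fin n → ℝ, v ≠ 0 → 0 < (Cᵀ *ᵥ v) ⬝ᵥ (Cᵀ *ᵥ v) := by
    intro v hv
    have hnn : (0:ℝ) ≤ (Cᵀ *ᵥ v) ⬝ᵥ (Cᵀ *ᵥ v) := by rw [hdot, cnorm]; positivity
    rcases lt_or_eq_of_le hnn with h | h
    · exact h
    · exact absurd (hinj v (dotProduct_self_eq_zero.mp h.symm)) hv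
  constructor
  · -- membership: the span of the first k+1 eigenvectors pushed through Cᵀ
    set ι₁ : Fin ((k : ℕ) + 1) → Fin n := Fin.castLE hknat with hι₁def
    have hι₁ : Function.Injective ι₁ := Fin.castLE_injective hknat
    set U₀ : Submodule ℝ (Fin N → ℝ) :=
      Submodule.span ℝ (Set.range fun j => Cᵀ *ᵥ xt (ι₁ j)) with hU₀def
    refine ⟨U₀, ?_, ?_, ?_⟩
    · rw [hU₀def, finrank_span_eq_card (hliC ι₁ hι₁), Fintype.card_fin]
    · rw [hU₀def, Submodule.span_le]
      rintro _ ⟨j, rfl⟩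
      exact ⟨Cᵀ *ᵥ xt (ι₁ j), by
        rw [Matrix.toLin'_apply, Matrix.mulVec_mulVec, Matrix.mul_assoc, hCCt, Matrix.mul_one]⟩
    · symm
      apply IsGreatest.csSup_eq
      constructor
      · -- lamt k is attained at y = Cᵀ xt k
        refine ⟨Cᵀ *ᵥ xt k, ?_, ?_, ?_⟩
        · apply Submodule.subset_span
          exact ⟨Fin.last (k : ℕ), rfl⟩
        · intro h
          have h5 := horthot k k
          rw [hinj _ h] at h5
          simpa using h5
        · rw [hquad, heigt, dotProduct_smul, hdot, horthot]
          simp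
      · -- lamt k is an upper bound
        rintro q ⟨y, hyU, hy0, rfl⟩
        rw [hU₀def, Submodule.mem_span_range_iff_exists_fun] at hyU
        obtain ⟨a, ha⟩ := hyU
        set v : Fin n → ℝ := ∑ j, a j • xt (ι₁ j) with hvdef
        have hyv : y = Cᵀ *ᵥ v := by rw [hvdef, hmvsum, ha]
        have hv0 : v ≠ 0 := by
          intro h
          rw [hyv, h, Matrix.mulVec_zero] at hy0
          exact hy0 rfl
        have czero : ∀ i : Fin n, (k : ℕ) < (i : ℕ) → xt i ⬝ᵥ v = 0 := by
          intro i hi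
          rw [hvdef, expand]
          apply Finset.sum_eq_zero
          intro j _
          have hne : i ≠ ι₁ j := by
            intro h
            have hj : (i : ℕ) = (j : ℕ) := by rw [h]; rfl
            have := j.isLt
            omega
          rw [horthot, if_neg hne, mul_zero]
        have hpos : 0 < y ⬝ᵥ y := by rw [hyv]; exact hdenpos v hv0
        rw [div_le_iff₀ hpos]
        have hnum : y ⬝ᵥ (L *ᵥ y) = ∑ i, lamt i * (xt i ⬝ᵥ v) ^ 2 := by
          rw [hyv, hquad, cquad]
        have hden : y ⬝ᵥ y = ∑ i, (xt i ⬝ᵥ v) ^ 2 := by rw [hyv, hdot, cnorm]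
        rw [hnum, hden, Finset.mul_sum]
        apply Finset.sum_le_sum
        intro i _
        by_cases hik : (i : ℕ) ≤ (k : ℕ)
        · exact mul_le_mul_of_nonneg_right (hmonot hik) (sq_nonneg _)
        · rw [czero i (by omega)]
          simp
  · -- lower bound
    rintro r ⟨U, hdim, hUrange, rfl⟩
    have hUsub : ∀ y ∈ U, ∃ v : Fin n → ℝ, y = Cᵀ *ᵥ v := by
      intro y hy
      obtain ⟨z, hz⟩ := hUrange hy
      exact ⟨C *ᵥ z, by rw [← hz, Matrix.toLin'_apply, Matrix.mulVec_mulVec]⟩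
    have hnpos : 0 < n := k.pos
    set M : ℝ := lamt ⟨n - 1, by omega⟩ with hMdef
    have hM : ∀ i : Fin n, lamt i ≤ M := by
      intro i
      apply hmonot
      rw [Fin.le_def]
      have := i.isLt
      simp only []
      omega
    set S : Set ℝ := { q : ℝ | ∃ y : Fin N → ℝ,
        y ∈ U ∧ y ≠ 0 ∧ q = (y ⬝ᵥ (L *ᵥ y)) / (y ⬝ᵥ y) } with hSdef
    have hbdd : BddAbove S := by
      refine ⟨M, ?_⟩
      rintro q ⟨y, hyU, hy0, rfl⟩
      obtain ⟨v, hyv⟩ := hUsub y hyU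
      have hv0 : v ≠ 0 := by
        intro h
        rw [hyv, h, Matrix.mulVec_zero] at hy0
        exact hy0 rfl
      have hpos : 0 < y ⬝ᵥ y := by rw [hyv]; exact hdenpos v hv0
      rw [div_le_iff₀ hpos, hyv, hquad, cquad, hdot, cnorm, Finset.mul_sum]
      apply Finset.sum_le_sum
      intro i _
      exact mul_le_mul_of_nonneg_right (hM i) (sq_nonneg _)
    -- find a good vector in U
    set V : Submodule ℝ (Fin n → ℝ) := U.comap (Matrix.toLin' Cᵀ) with hVdef
    have hUle : U ≤ LinearMap.range (Matrix.toLin' Cᵀ) := by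
      intro y hy
      obtain ⟨v, hv⟩ := hUsub y hy
      exact ⟨v, by rw [Matrix.toLin'_apply, ← hv]⟩
    have hmap : Submodule.map (Matrix.toLin' Cᵀ) V = U :=
      Submodule.map_comap_eq_self hUle
    have hfV : (k : ℕ) + 1 ≤ Module.finrank ℝ V := by
      rw [← hdim, ← hmap]
      exact Submodule.finrank_map_le _ _
    set ι₂ : Fin (n - (k : ℕ)) → Fin n :=
      (fun j => ⟨(k : ℕ) + (j : ℕ), by have := j.isLt; omega⟩) with hι₂def
    have hι₂ : Function.Injective ι₂ := by
      intro a b h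
      have : (k : ℕ) + (a : ℕ) = (k : ℕ) + (b : ℕ) := congrArg Fin.val h
      exact Fin.ext (by omega)
    set T : Submodule ℝ (Fin n → ℝ) :=
      Submodule.span ℝ (Set.range fun j => xt (ι₂ j)) with hTdef
    have hfT : Module.finrank ℝ T = n - (k : ℕ) := by
      rw [hTdef, finrank_span_eq_card (hlixt ι₂ hι₂), Fintype.card_fin]
    have hsum := Submodule.finrank_sup_add_finrank_inf_eq V T
    have hsup : Module.finrank ℝ ↥(V ⊔ T) ≤ n := by
      have h6 := Submodule.finrank_le (V ⊔ T)
      rwa [Module.finrank_fin_fun] at h6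
    have hVT : 1 ≤ Module.finrank ℝ ↥(V ⊓ T) := by omega
    have hVTne : V ⊓ T ≠ ⊥ := by
      intro h
      rw [h, finrank_bot] at hVT
      omega
    obtain ⟨v, hvmem, hv0⟩ := (Submodule.ne_bot_iff _).mp hVTne
    have hvV : v ∈ V := hvmem.1
    have hvT : v ∈ T := hvmem.2
    rw [hTdef, Submodule.mem_span_range_iff_exists_fun] at hvT
    obtain ⟨a, ha⟩ := hvT
    have czero : ∀ i : Fin n, (i : ℕ) < (k : ℕ) → xt i ⬝ᵥ v = 0 := by
      intro i hi
      rw [← ha, expand]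
      apply Finset.sum_eq_zero
      intro j _
      have hne : i ≠ ι₂ j := by
        intro h
        have hj : (i : ℕ) = (k : ℕ) + (j : ℕ) := by rw [h]
        omega
      rw [horthot, if_neg hne, mul_zero]
    set y₀ : Fin N → ℝ := Cᵀ *ᵥ v with hy₀def
    have hy₀U : y₀ ∈ U := by
      have := hvV
      rw [hVdef, Submodule.mem_comap, Matrix.toLin'_apply] at this
      exact this
    have hy₀0 : y₀ ≠ 0 := fun h => hv0 (hinj v h)
    have hpos : 0 < y₀ ⬝ᵥ y₀ := hdenpos v hv0
    have hq0mem : (y₀ ⬝ᵥ (L *ᵥ y₀)) / (y₀ ⬝ᵥ y₀) ∈ S := ⟨y₀, hy₀U, hy₀0, rfl⟩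
    have hq0ge : lamt k ≤ (y₀ ⬝ᵥ (L *ᵥ y₀)) / (y₀ ⬝ᵥ y₀) := by
      rw [le_div_iff₀ hpos, hy₀def, hquad, cquad, hdot, cnorm, Finset.mul_sum]
      apply Finset.sum_le_sum
      intro i _
      by_cases hik : (i : ℕ) < (k : ℕ)
      · rw [czero i hik]
        simp
      · exact mul_le_mul_of_nonneg_right (hmonot (by rw [Fin.le_def]; omega)) (sq_nonneg _)
    exact le_trans hq0ge (le_csSup hbdd hq0mem)
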